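/- Let A and B be linear subspaces of ℝ^n and set Ã = A + (A^⊥ ∩ B^⊥). Then for every x ∈ A + B, the orthogonal projections of x onto A and onto Ã coincide: P_Ã x = P_A x; consequently the reflections coincide, R_Ã x = R_A x, for all x ∈ A + B. -/

import Mathlib

/-- The reflection across a subspace `K` of Euclidean space, `R_K = 2 P_K - Id`. -/
noncomputable def reflS {n : ℕ} (K : Submodule ℝ (EuclideanSpace ℝ (Fin n)))
    (x : EuclideanSpace ℝ (Fin n)) : EuclideanSpace ℝ (Fin n) :=
  (2:ℝ) • (K.orthogonalProjectionOnto x : EuclideanSpace ℝ (Fin n)) - x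

/-- For linear subspaces `A, B` of ℝⁿ and the enlargement `Ã = A + (A^⊥ ∩ B^⊥)`:
on `A + B` the orthogonal projections (and hence the reflections) onto `A` and onto `Ã`
coincide. -/
theorem stmt14 {n : ℕ} (A B : Submodule ℝ (EuclideanSpace ℝ (Fin n))) :
    ∀ x ∈ (A ⊔ B : Submodule ℝ (EuclideanSpace ℝ (Fin n))),
      ((A ⊔ (Aᗮ ⊓ Bᗮ)).orthogonalProjectionOnto x : EuclideanSpace ℝ (Fin n)) =
        (A.orthogonalProjectionOnto x : EuclideanSpace ℝ (Fin n)) ∧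
      reflS (A ⊔ (Aᗮ ⊓ Bᗮ)) x = reflS A x := by
  intro x hx
  have hA : (A.orthogonalProjectionOnto x : EuclideanSpace ℝ (Fin n)) ∈ A ⊔ (Aᗮ ⊓ Bᗮ) :=
    Submodule.mem_sup_left (A.orthogonalProjectionOnto x).2
  have hperp : x - (A.orthogonalProjectionOnto x : EuclideanSpace ℝ (Fin n)) ∈ (A ⊔ (Aᗮ ⊓ Bᗮ))ᗮ := by
    rw [← Submodule.inf_orthogonal]
    refine Submodule.mem_inf.2 ⟨Submodule.sub_starProjection_mem_orthogonal x, ?_⟩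
    rw [Submodule.inf_orthogonal]
    exact Submodule.le_orthogonal_orthogonal _
      (Submodule.sub_mem _ hx (Submodule.mem_sup_left (A.orthogonalProjectionOnto x).2))
  have key : ((A ⊔ (Aᗮ ⊓ Bᗮ)).orthogonalProjectionOnto x : EuclideanSpace ℝ (Fin n)) =
      (A.orthogonalProjectionOnto x : EuclideanSpace ℝ (Fin n)) :=
    Submodule.eq_starProjection_of_mem_orthogonal hA hperp
  exact ⟨key, by simp [reflS, key]⟩
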